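/- Let X ⊆ ℝ^n be convex, u : ℝ^n → ℝ convex and differentiable, and g_1, …, g_m : ℝ^n → ℝ differentiable with g_j being (μ_j, q_j)-uniformly convex (μ_j ≥ 0, q_j ≥ 1). Let h : ℝ^m → ℝ be convex, componentwise nondecreasing, and differentiable with L_h-Lipschitz gradient for some L_h > 0, and let h* be its Fenchel conjugate. Let x⋆ ∈ X, set g = (g_1, …, g_m) and λ⋆ = ∇h(g(x⋆)), and assume first-order optimality: ⟨∇u(x⋆) + Σ_j λ⋆_j ∇g_j(x⋆), x − x⋆⟩ ≥ 0 for all x ∈ X. Then for all x ∈ X and all λ ∈ dom h*: [⟨λ⋆, g(x)⟩ − h*(λ⋆) + u(x)] − [⟨λ, g(x⋆)⟩ − h*(λ) + u(x⋆)] ≥ Σ_{j=1}^m λ⋆_j (μ_j/(q_j+1)) ‖x − x⋆‖^{q_j+1} + (1/(2L_h)) ‖λ − λ⋆‖². -/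

import Mathlib

open scoped RealInnerProductSpace BigOperators

section Helpers

variable {E : Type*} [NormedAddCommGroup E] [InnerProductSpace ℝ E] [CompleteSpace E]

lemma curve_deriv {f : E → ℝ} {f' : E → E} (hd : ∀ z, HasGradientAt f (f' z) z)
    (x d : E) (t : ℝ) :
    HasDerivAt (fun t : ℝ => f (x + t • d)) ⟪f' (x + t • d), d⟫ t := by
  have hc : HasDerivAt (fun t : ℝ => x + t • d) d t := by
    simpa using ((hasDerivAt_id t).smul_const d).const_add x
  have h1 : HasFDerivAt f (InnerProductSpace.toDual ℝ E (f' (x + t • d))) (x + t • d) :=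
    hd (x + t • d)
  simpa [InnerProductSpace.toDual_apply_apply, Function.comp_def] using h1.comp_hasDerivAt t hc

lemma grad_ineq {f : E → ℝ} {f' : E → E} (hc : ConvexOn ℝ Set.univ f)
    (hd : ∀ z, HasGradientAt f (f' z) z) (x y : E) :
    ⟪f' x, y - x⟫ ≤ f y - f x := by
  set d := y - x with hdv
  have hφ := curve_deriv hd x d
  have hconv : ConvexOn ℝ Set.univ (fun t : ℝ => f (x + t • d)) := by
    have h2 := hc.comp_affineMap (AffineMap.lineMap x y)
    have he : (fun t : ℝ => f (x + t • d)) = f ∘ (AffineMap.lineMap x y) := by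
      funext t
      simp [AffineMap.lineMap_apply_module, hdv]
      ring_nf
      congr 1
      module
    rw [he]
    simpa using h2
  have := hconv.le_slope_of_hasDerivAt (Set.mem_univ (0:ℝ)) (Set.mem_univ (1:ℝ))
    zero_lt_one (hφ 0)
  simp only [slope_def_field] at this
  have h0 : x + (0:ℝ) • d = x := by simp
  have h1 : x + (1:ℝ) • d = y := by simp [hdv]
  rw [h0, h1] at this
  simpa using this

lemma descent_lemma {f : E → ℝ} {f' : E → E} (hd : ∀ z, HasGradientAt f (f' z) z)
    {L : ℝ} (hL : 0 < L) (hLip : ∀ z w, ‖f' z - f' w‖ ≤ L * ‖z - w‖) (w z : E) :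
    f z ≤ f w + ⟪f' w, z - w⟫ + L / 2 * ‖z - w‖ ^ 2 := by
  set d := z - w with hdv
  have hcontf' : Continuous f' := by
    have : LipschitzWith (Real.toNNReal L) f' := by
      apply LipschitzWith.of_dist_le_mul
      intro a b
      rw [dist_eq_norm, dist_eq_norm]
      exact (hLip a b).trans (le_of_eq (by rw [Real.coe_toNNReal _ hL.le]))
    exact this.continuous
  set D : ℝ → ℝ := fun t => ⟪f' (w + t • d), d⟫ with hD
  have hψ := curve_deriv hd w d
  have hcontD : Continuous D := by
    apply Continuous.inner (hcontf'.comp (by continuity)) continuous_const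
  have key : ∫ t in (0:ℝ)..1, D t = f (w + (1:ℝ) • d) - f (w + (0:ℝ) • d) :=
    intervalIntegral.integral_eq_sub_of_hasDerivAt (fun t _ => hψ t)
      (hcontD.intervalIntegrable 0 1)
  have hb : ∀ t ∈ Set.Icc (0:ℝ) 1, D t ≤ D 0 + (L * ‖d‖ ^ 2) * t := by
    intro t ht
    have h1 : D t - D 0 = ⟪f' (w + t • d) - f' w, d⟫ := by
      simp [hD, inner_sub_left]
    have h2 : ⟪f' (w + t • d) - f' w, d⟫ ≤ ‖f' (w + t • d) - f' w‖ * ‖d‖ :=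
      real_inner_le_norm _ _
    have h3 : ‖f' (w + t • d) - f' w‖ ≤ L * ‖t • d‖ := by
      simpa using hLip (w + t • d) w
    have h4 : ‖t • d‖ = t * ‖d‖ := by
      rw [norm_smul, Real.norm_eq_abs, abs_of_nonneg ht.1]
    have h5 : ‖f' (w + t • d) - f' w‖ * ‖d‖ ≤ L * ‖d‖ ^ 2 * t := by
      calc ‖f' (w + t • d) - f' w‖ * ‖d‖ ≤ L * ‖t • d‖ * ‖d‖ :=
            mul_le_mul_of_nonneg_right h3 (norm_nonneg d)
        _ = L * ‖d‖ ^ 2 * t := by rw [h4]; ring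
    linarith
  have hint : ∫ t in (0:ℝ)..1, D t ≤ ∫ t in (0:ℝ)..1, (D 0 + (L * ‖d‖ ^ 2) * t) := by
    apply intervalIntegral.integral_mono_on zero_le_one (hcontD.intervalIntegrable 0 1)
      ((continuous_const.add (continuous_const.mul continuous_id')).intervalIntegrable 0 1) hb
  have hval : ∫ t in (0:ℝ)..1, (D 0 + (L * ‖d‖ ^ 2) * t) = D 0 + L / 2 * ‖d‖ ^ 2 := by
    rw [intervalIntegral.integral_add (f := fun _ => D 0) (g := fun t => L * ‖d‖ ^ 2 * t)
      (intervalIntegrable_const)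
      (((continuous_const.mul continuous_id')).intervalIntegrable 0 1),
      intervalIntegral.integral_const_mul, integral_id]
    simp; ring
  have h0 : w + (0:ℝ) • d = w := by simp
  have h1 : w + (1:ℝ) • d = z := by simp [hdv]
  have hD0 : D 0 = ⟪f' w, d⟫ := by simp [hD]
  rw [hval, hD0] at hint
  rw [h0, h1] at key
  linarith [key ▸ hint]

end Helpers

/-- Fenchel conjugate of a real-valued function on `ℝ^m`, valued in `EReal`. -/
noncomputable def fenchelConjR {m : ℕ} (h : EuclideanSpace ℝ (Fin m) → ℝ)
    (s : EuclideanSpace ℝ (Fin m)) : EReal :=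
  ⨆ z : EuclideanSpace ℝ (Fin m), ((⟪s, z⟫ - h z : ℝ) : EReal)

/-- Growth of the gap function: for `(μ_j, q_j)`-uniformly convex components `g_j`, smooth
componentwise-nondecreasing `h` with `L_h`-Lipschitz gradient, `λ⋆ = ∇h(g(x⋆))`, and `x⋆`
first-order optimal, the gap
`[⟨λ⋆, g(x)⟩ − h*(λ⋆) + u(x)] − [⟨λ, g(x⋆)⟩ − h*(λ) + u(x⋆)]` is at least
`Σ_j λ⋆_j (μ_j/(q_j+1)) ‖x − x⋆‖^{q_j+1} + (1/(2L_h)) ‖λ − λ⋆‖²`. -/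
theorem stmt14 {n m : ℕ}
    (X : Set (EuclideanSpace ℝ (Fin n))) (hX : Convex ℝ X)
    (u : EuclideanSpace ℝ (Fin n) → ℝ)
    (u' : EuclideanSpace ℝ (Fin n) → EuclideanSpace ℝ (Fin n))
    (huconv : ConvexOn ℝ Set.univ u) (hu' : ∀ x, HasGradientAt u (u' x) x)
    (g : Fin m → EuclideanSpace ℝ (Fin n) → ℝ)
    (g' : Fin m → EuclideanSpace ℝ (Fin n) → EuclideanSpace ℝ (Fin n))
    (hg' : ∀ j x, HasGradientAt (g j) (g' j x) x)
    (μ q : Fin m → ℝ) (hμ : ∀ j, 0 ≤ μ j) (hq : ∀ j, 1 ≤ q j)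
    (huc : ∀ j x y, g j x + ⟪g' j x, y - x⟫ + μ j / (q j + 1) * ‖y - x‖ ^ (q j + 1) ≤ g j y)
    (h : EuclideanSpace ℝ (Fin m) → ℝ)
    (h' : EuclideanSpace ℝ (Fin m) → EuclideanSpace ℝ (Fin m))
    (hhconv : ConvexOn ℝ Set.univ h)
    (hhmono : ∀ z w : EuclideanSpace ℝ (Fin m), (∀ j, z j ≤ w j) → h z ≤ h w)
    (hh' : ∀ z, HasGradientAt h (h' z) z)
    (Lh : ℝ) (hLh : 0 < Lh) (hhLip : ∀ z w, ‖h' z - h' w‖ ≤ Lh * ‖z - w‖)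
    (xstar : EuclideanSpace ℝ (Fin n)) (hxstar : xstar ∈ X)
    (gvec : EuclideanSpace ℝ (Fin n) → EuclideanSpace ℝ (Fin m))
    (hgvec : ∀ x j, gvec x j = g j x)
    (lamstar : EuclideanSpace ℝ (Fin m)) (hlamstar : lamstar = h' (gvec xstar))
    (hopt : ∀ x ∈ X, 0 ≤ ⟪u' xstar + ∑ j, lamstar j • g' j xstar, x - xstar⟫) :
    ∀ x ∈ X, ∀ lam : EuclideanSpace ℝ (Fin m), fenchelConjR h lam < ⊤ →
      ((∑ j, lamstar j * (μ j / (q j + 1)) * ‖x - xstar‖ ^ (q j + 1)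
          + 1 / (2 * Lh) * ‖lam - lamstar‖ ^ 2 : ℝ) : EReal)
        ≤ (((⟪lamstar, gvec x⟫ : ℝ) : EReal) - fenchelConjR h lamstar + (u x : EReal))
          - (((⟪lam, gvec xstar⟫ : ℝ) : EReal) - fenchelConjR h lam + (u xstar : EReal)) := by
  intro x hx lam hFlt
  set z₀ : EuclideanSpace ℝ (Fin m) := gvec xstar with hz₀
  -- gradient inequality for h
  have hgradh : ∀ zz : EuclideanSpace ℝ (Fin m), ⟪lamstar, zz - z₀⟫ ≤ h zz - h z₀ := by
    intro zz
    have := grad_ineq hhconv hh' z₀ zz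
    rwa [← hlamstar] at this
  -- lamstar is componentwise nonnegative
  have hlamnn : ∀ j, 0 ≤ lamstar j := by
    intro j
    set e : EuclideanSpace ℝ (Fin m) := EuclideanSpace.single j (1:ℝ) with he
    have h1 := hgradh (z₀ - e)
    have h2 : h (z₀ - e) ≤ h z₀ := by
      apply hhmono
      intro j'
      have h3 : (0:ℝ) ≤ e j' := by
        simp [he, EuclideanSpace.single_apply]
        split <;> norm_num
      have h4 : (z₀ - e) j' = z₀ j' - e j' := rfl
      linarith [h4 ▸ le_refl ((z₀ - e) j')]
    have h5 : (z₀ - e) - z₀ = -e := by abel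
    rw [h5] at h1
    have h6 : ⟪lamstar, -e⟫ = -(lamstar j) := by
      rw [inner_neg_right, he]
      simp [EuclideanSpace.inner_single_right]
    rw [h6] at h1
    linarith
  -- value of the conjugate at lamstar
  set B : ℝ := ⟪lamstar, z₀⟫ - h z₀ with hBdef
  have hB : fenchelConjR h lamstar = ((B : ℝ) : EReal) := by
    apply le_antisymm
    · apply iSup_le
      intro zz
      apply EReal.coe_le_coe_iff.2
      have := hgradh zz
      rw [inner_sub_right] at this
      simp only [hBdef]
      linarith
    · exact le_iSup (fun zz : EuclideanSpace ℝ (Fin m) =>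
        (((⟪lamstar, zz⟫ - h zz : ℝ)) : EReal)) z₀
  -- the conjugate at lam is a real number
  set F : EReal := fenchelConjR h lam with hFdef
  have hFge : ∀ zz : EuclideanSpace ℝ (Fin m), ((⟪lam, zz⟫ - h zz : ℝ) : EReal) ≤ F :=
    fun zz => le_iSup (fun zz : EuclideanSpace ℝ (Fin m) =>
      (((⟪lam, zz⟫ - h zz : ℝ)) : EReal)) zz
  have hFnebot : F ≠ ⊥ := ((EReal.bot_lt_coe _).trans_le (hFge 0)).ne'
  set r : ℝ := F.toReal with hrdef
  have hr : ((r : ℝ) : EReal) = F := EReal.coe_toReal hFlt.ne hFnebot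
  have hrge : ∀ zz : EuclideanSpace ℝ (Fin m), ⟪lam, zz⟫ - h zz ≤ r := by
    intro zz
    exact EReal.coe_le_coe_iff.1 (hr ▸ hFge zz)
  -- strong convexity of the conjugate: key inequality for r
  set v : EuclideanSpace ℝ (Fin m) := lam - lamstar with hvdef
  have hconj : ⟪lam, z₀⟫ - h z₀ + 1 / (2 * Lh) * ‖v‖ ^ 2 ≤ r := by
    have hd := descent_lemma hh' hLh hhLip z₀ (z₀ + (1 / Lh) • v)
    have hz : z₀ + (1 / Lh) • v - z₀ = (1 / Lh) • v := by abel
    rw [hz] at hd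
    have hr1 := hrge (z₀ + (1 / Lh) • v)
    have hi1 : ⟪lam, z₀ + (1 / Lh) • v⟫ = ⟪lam, z₀⟫ + (1 / Lh) * ⟪lam, v⟫ := by
      rw [inner_add_right, real_inner_smul_right]
    have hi2 : ⟪h' z₀, (1 / Lh) • v⟫ = (1 / Lh) * ⟪lamstar, v⟫ := by
      rw [← hlamstar, real_inner_smul_right]
    have hi3 : ‖(1 / Lh) • v‖ ^ 2 = (1 / Lh) ^ 2 * ‖v‖ ^ 2 := by
      rw [norm_smul, Real.norm_eq_abs, abs_of_pos (by positivity), mul_pow]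
    have hi4 : ⟪lam, v⟫ - ⟪lamstar, v⟫ = ‖v‖ ^ 2 := by
      rw [← inner_sub_left, ← hvdef, real_inner_self_eq_norm_sq]
    rw [hi2, hi3] at hd
    rw [hi1] at hr1
    have halg : (1 / Lh) * ⟪lam, v⟫ - (1 / Lh) * ⟪lamstar, v⟫
        - Lh / 2 * ((1 / Lh) ^ 2 * ‖v‖ ^ 2) = 1 / (2 * Lh) * ‖v‖ ^ 2 := by
      rw [← mul_sub, hi4]
      field_simp
      ring
    linarith
  -- main growth inequality
  have hu := grad_ineq huconv hu' xstar x
  have hgj : ∀ j, lamstar j * ⟪g' j xstar, x - xstar⟫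
      + lamstar j * (μ j / (q j + 1)) * ‖x - xstar‖ ^ (q j + 1)
      ≤ lamstar j * (g j x - g j xstar) := by
    intro j
    have h1 := huc j xstar x
    have h2 := mul_le_mul_of_nonneg_left
      (by linarith : ⟪g' j xstar, x - xstar⟫
        + μ j / (q j + 1) * ‖x - xstar‖ ^ (q j + 1) ≤ g j x - g j xstar) (hlamnn j)
    nlinarith [h2]
  have hinner : ⟪lamstar, gvec x⟫ - ⟪lamstar, z₀⟫
      = ∑ j, lamstar j * (g j x - g j xstar) := by
    rw [← inner_sub_right]
    rw [PiLp.inner_apply]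
    apply Finset.sum_congr rfl
    intro j _
    have : (gvec x - z₀) j = g j x - g j xstar := by
      have : (gvec x - z₀) j = gvec x j - z₀ j := rfl
      rw [this, hgvec, hz₀, hgvec]
    rw [this]
    simp [RCLike.inner_apply, mul_comm]
  have hoptx := hopt x hx
  rw [inner_add_left, sum_inner] at hoptx
  simp only [real_inner_smul_left] at hoptx
  have hsum := Finset.sum_le_sum (fun j (_ : j ∈ Finset.univ) => hgj j)
  rw [Finset.sum_add_distrib] at hsum
  have hmain : (∑ j, lamstar j * (μ j / (q j + 1)) * ‖x - xstar‖ ^ (q j + 1))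
      ≤ ⟪lamstar, gvec x⟫ - ⟪lamstar, z₀⟫ + (u x - u xstar) := by
    rw [hinner]
    linarith
  -- put it all together in EReal
  rw [hB, ← hr]
  rw [← EReal.coe_sub, ← EReal.coe_add, ← EReal.coe_sub, ← EReal.coe_add, ← EReal.coe_sub]
  apply EReal.coe_le_coe_iff.2
  simp only [hBdef]
  linarith
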